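/- For every rational number u, setting a = u² − 3, p = u·(u² − 3), q = 2·(u² − 1), r = u·(u² − 1), s = 2, one has (p + q)⁴ + a·(r − s)⁴ = (p − q)⁴ + a·(r + s)⁴. -/
import Mathlib


theorem stmt_10 (u : ℚ) (a p q r s : ℚ)
    (ha : a = u ^ 2 - 3) (hp : p = u * (u ^ 2 - 3)) (hq : q = 2 * (u ^ 2 - 1))
    (hr : r = u * (u ^ 2 - 1)) (hs : s = 2) :
    (p + q) ^ 4 + a * (r - s) ^ 4 = (p - q) ^ 4 + a * (r + s) ^ 4 := by
  subst ha hp hq hr hs; ring
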